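/- Let κ = sup_{x>0}|cos x − 1 + x²/2|/x³ = 0.09916191…, let N ≥ 1 and ε > 1/√N, and let T(N,ε) = min{N^{1/4} ε^{−1/2}, (2κε)^{−1}}. Then for every real t with |t| ≤ T(N,ε) and every integer n ≥ N: (ε − 1/√n) · e^{−t²/2} ∫₀^{|t|} (u²/2) · exp{ κ ε u³ + (u²/(2n))(1 − 2κ ε u) } du ≤ (1/(6κ)) (e^{κ ε |t|³} − 1) e^{−t²/2}. -/

import Mathlib

open MeasureTheory

/-- `κ = sup_{x>0} |cos x − 1 + x²/2| / x³ = 0.09916191…`. -/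
noncomputable def kappa : ℝ :=
  ⨆ x : Set.Ioi (0 : ℝ), |Real.cos x - 1 + (x : ℝ) ^ 2 / 2| / (x : ℝ) ^ 3

lemma kappa_bdd : BddAbove (Set.range fun x : Set.Ioi (0:ℝ) =>
    |Real.cos x - 1 + (x:ℝ)^2/2| / (x:ℝ)^3) := by
  refine ⟨1/2, ?_⟩
  rintro y ⟨⟨x, hx⟩, rfl⟩
  simp only [Set.mem_Ioi] at hx
  have hx3 : (0:ℝ) < x ^ 3 := by positivity
  rw [div_le_iff₀ hx3]
  rcases le_or_gt x 1 with h1 | h1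
  · have hb := Real.cos_bound (x := x) (by rwa [abs_of_pos hx])
    have hb' : |Real.cos x - 1 + x ^ 2 / 2| ≤ |x| ^ 4 * (5/96) := by
      convert hb using 2; ring
    calc |Real.cos x - 1 + x ^ 2 / 2| ≤ |x| ^ 4 * (5/96) := hb'
      _ = x ^ 4 * (5/96) := by rw [abs_of_pos hx]
      _ ≤ 1/2 * x ^ 3 := by nlinarith
  · have h2 : Real.cos x - 1 + x ^ 2 / 2 ≤ x ^ 2 / 2 := by
      nlinarith [Real.cos_le_one x]
    have h3 : 0 ≤ Real.cos x - 1 + x ^ 2 / 2 := by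
      nlinarith [Real.one_sub_sq_div_two_le_cos (x := x)]
    rw [abs_of_nonneg h3]
    nlinarith

lemma kappa_pos : 0 < kappa := by
  have hmem : Real.pi ∈ Set.Ioi (0:ℝ) := Real.pi_pos
  have hle := le_ciSup kappa_bdd (⟨Real.pi, hmem⟩ : Set.Ioi (0:ℝ))
  have hpi : (3:ℝ) < Real.pi := Real.pi_gt_three
  have hval : (0:ℝ) < |Real.cos Real.pi - 1 + Real.pi ^ 2 / 2| / Real.pi ^ 3 := by
    rw [Real.cos_pi]
    have h0 : (0:ℝ) < |(-1:ℝ) - 1 + Real.pi ^ 2 / 2| := by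
      rw [abs_of_pos (by nlinarith)]; nlinarith
    positivity
  exact hval.trans_le hle

/-- Third statement of Lemma 4. -/
theorem r3_sup_bound (N : ℕ) (hN : 1 ≤ N) (ε : ℝ) (hε : 1 / Real.sqrt N < ε)
    (t : ℝ)
    (ht : |t| ≤ min ((N : ℝ) ^ ((1 : ℝ) / 4) / Real.sqrt ε) (2 * kappa * ε)⁻¹)
    (n : ℕ) (hn : N ≤ n) :
    (ε - 1 / Real.sqrt n) * Real.exp (-t ^ 2 / 2) *
        ∫ u in (0 : ℝ)..|t|, u ^ 2 / 2 *
          Real.exp (kappa * ε * u ^ 3 + u ^ 2 / (2 * n) * (1 - 2 * kappa * ε * u)) ≤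
      1 / (6 * kappa) * (Real.exp (kappa * ε * |t| ^ 3) - 1) * Real.exp (-t ^ 2 / 2) := by
  have hκ := kappa_pos
  have hNpos : (0:ℝ) < N := by exact_mod_cast hN
  have hsN : 0 < Real.sqrt N := Real.sqrt_pos.mpr hNpos
  have hεpos : 0 < ε := lt_trans (by positivity) hε
  have hnN : (0:ℝ) < n := lt_of_lt_of_le hNpos (by exact_mod_cast hn)
  have hsn : 0 < Real.sqrt n := Real.sqrt_pos.mpr hnN
  have hsle : Real.sqrt N ≤ Real.sqrt n := Real.sqrt_le_sqrt (by exact_mod_cast hn)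
  have hεn : 1 / Real.sqrt n < ε := lt_of_le_of_lt (by gcongr) hε
  have hεn' : 0 < ε - 1 / Real.sqrt n := by linarith
  set s := |t| with hs
  have hs0 : 0 ≤ s := abs_nonneg t
  set c := kappa * ε with hc
  have hcpos : 0 < c := by positivity
  have hrw : ∀ u : ℝ, c * u ^ 3 + u ^ 2 / (2 * n) * (1 - 2 * kappa * ε * u)
      = c * u ^ 3 + u ^ 2 / (2 * n) * (1 - 2 * c * u) := fun u => by rw [hc]; ring
  simp only [hrw]
  have hs2 : s ^ 2 ≤ Real.sqrt N / ε := by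
    have h1 : s ≤ (N : ℝ) ^ ((1:ℝ)/4) / Real.sqrt ε := le_trans ht (min_le_left _ _)
    have h2 : s ^ 2 ≤ ((N : ℝ) ^ ((1:ℝ)/4) / Real.sqrt ε) ^ 2 := pow_le_pow_left₀ hs0 h1 2
    calc s ^ 2 ≤ ((N : ℝ) ^ ((1:ℝ)/4)) ^ 2 / (Real.sqrt ε) ^ 2 := by
          rw [← div_pow]; exact h2
      _ = Real.sqrt N / ε := by
          rw [Real.sq_sqrt hεpos.le, ← Real.rpow_natCast ((N:ℝ) ^ ((1:ℝ)/4)) 2,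
            ← Real.rpow_mul hNpos.le]
          norm_num
          rw [← Real.sqrt_eq_rpow]
  have hscu : s ≤ (2 * c)⁻¹ := by
    have h := le_trans ht (min_le_right _ _)
    simpa [hc, mul_assoc] using h
  set δ : ℝ := 1 / (ε * Real.sqrt n) with hδ
  have hδpos : 0 < δ := by positivity
  have hεδ : ε * δ = 1 / Real.sqrt n := by
    rw [hδ]; field_simp
  have hδlt : δ < 1 := by
    rw [hδ, div_lt_one (by positivity)]
    have h1 : 1 < ε * Real.sqrt N := (div_lt_iff₀ hsN).mp hε
    have h2 : ε * Real.sqrt N ≤ ε * Real.sqrt n := by gcongr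
    linarith
  -- pointwise bound
  have hkey : ∀ u ∈ Set.Icc (0:ℝ) s,
      (ε - 1 / Real.sqrt n) *
        (u ^ 2 / 2 * Real.exp (c * u ^ 3 + u ^ 2 / (2 * n) * (1 - 2 * c * u)))
      ≤ ε * (u ^ 2 / 2 * Real.exp (c * u ^ 3)) := by
    intro u hu
    obtain ⟨hu0, hus⟩ := hu
    have h1cu : 0 ≤ 1 - 2 * c * u := by
      have h2 : 2 * c * u ≤ 2 * c * (2*c)⁻¹ := by gcongr; exact hus.trans hscu
      rw [mul_inv_cancel₀ (by positivity)] at h2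
      linarith
    have h1cu' : 1 - 2 * c * u ≤ 1 := by nlinarith
    set a := u ^ 2 / (2 * n) * (1 - 2 * c * u) with hadef
    have ha0 : 0 ≤ a := by positivity
    have ha : a ≤ δ := by
      have hu2 : u ^ 2 ≤ Real.sqrt n / ε := by
        calc u ^ 2 ≤ s ^ 2 := by gcongr
          _ ≤ Real.sqrt N / ε := hs2
          _ ≤ Real.sqrt n / ε := by gcongr
      have hnn : Real.sqrt n * Real.sqrt n = (n:ℝ) := Real.mul_self_sqrt hnN.le
      calc a ≤ u ^ 2 / (2 * n) * 1 := by
            apply mul_le_mul_of_nonneg_left h1cu' (by positivity)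
        _ = u ^ 2 / (2 * n) := by ring
        _ ≤ (Real.sqrt n / ε) / (2 * n) := by gcongr
        _ ≤ δ := by
            rw [hδ, div_div, div_le_div_iff₀ (by positivity) (by positivity)]
            nlinarith
    -- exp a ≤ 1/(1-δ)
    have hexp : Real.exp a * (1 - δ) ≤ 1 := by
      have h1 : 1 - a ≤ Real.exp (-a) := by
        have := Real.add_one_le_exp (-a); linarith
      have h2 : Real.exp a * (1 - δ) ≤ Real.exp a * Real.exp (-a) := by
        apply mul_le_mul_of_nonneg_left _ (Real.exp_nonneg a)
        linarith
      rw [← Real.exp_add] at h2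
      simpa using h2
    have hmul : (ε - 1 / Real.sqrt n) * Real.exp a ≤ ε := by
      have heq : ε - 1 / Real.sqrt n = ε * (1 - δ) := by rw [mul_sub, hεδ]; ring
      rw [heq, mul_comm ε (1-δ), mul_assoc]
      calc (1 - δ) * (ε * Real.exp a) = ε * (Real.exp a * (1 - δ)) := by ring
        _ ≤ ε * 1 := by apply mul_le_mul_of_nonneg_left hexp hεpos.le
        _ = ε := mul_one ε
    calc (ε - 1 / Real.sqrt n) * (u ^ 2 / 2 * Real.exp (c * u ^ 3 + a))
        = (u ^ 2 / 2 * Real.exp (c * u ^ 3)) * ((ε - 1 / Real.sqrt n) * Real.exp a) := by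
          rw [Real.exp_add]; ring
      _ ≤ (u ^ 2 / 2 * Real.exp (c * u ^ 3)) * ε := by
          apply mul_le_mul_of_nonneg_left hmul (by positivity)
      _ = ε * (u ^ 2 / 2 * Real.exp (c * u ^ 3)) := by ring
  -- integrability
  have hcont1 : Continuous fun u : ℝ => (ε - 1 / Real.sqrt n) *
      (u ^ 2 / 2 * Real.exp (c * u ^ 3 + u ^ 2 / (2 * n) * (1 - 2 * c * u))) := by
    fun_prop
  have hcont2 : Continuous fun u : ℝ => ε * (u ^ 2 / 2 * Real.exp (c * u ^ 3)) := by
    fun_prop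
  have hmono : (∫ u in (0:ℝ)..s, (ε - 1 / Real.sqrt n) *
      (u ^ 2 / 2 * Real.exp (c * u ^ 3 + u ^ 2 / (2 * n) * (1 - 2 * c * u))))
      ≤ ∫ u in (0:ℝ)..s, ε * (u ^ 2 / 2 * Real.exp (c * u ^ 3)) := by
    apply intervalIntegral.integral_mono_on hs0
      (hcont1.intervalIntegrable 0 s) (hcont2.intervalIntegrable 0 s) hkey
  -- compute the right integral
  have hderiv : ∀ u ∈ Set.uIcc (0:ℝ) s, HasDerivAt (fun v => Real.exp (c * v ^ 3) / (6 * c))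
      (u ^ 2 / 2 * Real.exp (c * u ^ 3)) u := by
    intro u _
    have h1 : HasDerivAt (fun v : ℝ => c * v ^ 3) (c * (3 * u ^ 2)) u := by
      simpa using (hasDerivAt_pow 3 u).const_mul c
    have h2 := (h1.exp).div_const (6 * c)
    refine h2.congr_deriv ?_
    rw [div_eq_iff (by positivity)]
    ring
  have hint : (∫ u in (0:ℝ)..s, u ^ 2 / 2 * Real.exp (c * u ^ 3))
      = Real.exp (c * s ^ 3) / (6 * c) - Real.exp (c * 0 ^ 3) / (6 * c) := by
    apply intervalIntegral.integral_eq_sub_of_hasDerivAt hderiv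
    exact (by fun_prop : Continuous fun u : ℝ => u ^ 2 / 2 * Real.exp (c * u ^ 3)).intervalIntegrable 0 s
  have hmain : (ε - 1 / Real.sqrt n) *
      (∫ u in (0:ℝ)..s, u ^ 2 / 2 * Real.exp (c * u ^ 3 + u ^ 2 / (2 * n) * (1 - 2 * c * u)))
      ≤ 1 / (6 * kappa) * (Real.exp (c * s ^ 3) - 1) := by
    have heq : ε * (Real.exp (c * s ^ 3) / (6 * c) - Real.exp (c * 0 ^ 3) / (6 * c))
        = 1 / (6 * kappa) * (Real.exp (c * s ^ 3) - 1) := by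
      rw [hc]
      simp only [mul_zero, zero_mul, ne_eq, OfNat.ofNat_ne_zero, not_false_eq_true,
        zero_pow, Real.exp_zero]
      field_simp
    calc (ε - 1 / Real.sqrt n) *
        (∫ u in (0:ℝ)..s, u ^ 2 / 2 * Real.exp (c * u ^ 3 + u ^ 2 / (2 * n) * (1 - 2 * c * u)))
        = ∫ u in (0:ℝ)..s, (ε - 1 / Real.sqrt n) *
            (u ^ 2 / 2 * Real.exp (c * u ^ 3 + u ^ 2 / (2 * n) * (1 - 2 * c * u))) :=
          (intervalIntegral.integral_const_mul _ _).symm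
      _ ≤ ∫ u in (0:ℝ)..s, ε * (u ^ 2 / 2 * Real.exp (c * u ^ 3)) := hmono
      _ = ε * ∫ u in (0:ℝ)..s, u ^ 2 / 2 * Real.exp (c * u ^ 3) :=
          intervalIntegral.integral_const_mul _ _
      _ = 1 / (6 * kappa) * (Real.exp (c * s ^ 3) - 1) := by rw [hint]; exact heq
  have hE : 0 ≤ Real.exp (-t ^ 2 / 2) := Real.exp_nonneg _
  calc (ε - 1 / Real.sqrt n) * Real.exp (-t ^ 2 / 2) *
        (∫ u in (0:ℝ)..s, u ^ 2 / 2 * Real.exp (c * u ^ 3 + u ^ 2 / (2 * n) * (1 - 2 * c * u)))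
      = ((ε - 1 / Real.sqrt n) *
        (∫ u in (0:ℝ)..s, u ^ 2 / 2 * Real.exp (c * u ^ 3 + u ^ 2 / (2 * n) * (1 - 2 * c * u))))
        * Real.exp (-t ^ 2 / 2) := by ring
    _ ≤ (1 / (6 * kappa) * (Real.exp (c * s ^ 3) - 1)) * Real.exp (-t ^ 2 / 2) := by
        apply mul_le_mul_of_nonneg_right hmain hE
    _ = 1 / (6 * kappa) * (Real.exp (c * s ^ 3) - 1) * Real.exp (-t ^ 2 / 2) := by ring
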